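/- Grid approximation for γ-Lipschitz extended security games (core of the PTAS): Let γ > 0, ε > 0, set ε' := ε/γ, and assume 1/ε' is a positive integer. Suppose the game is γ-Lipschitz, i.e., ‖D(μ − μ')‖_∞ ≤ γ·‖μ − μ'‖_∞ for all μ, μ' ∈ Δ_M. Then for every w ∈ ℝ^M, max_{μ' ∈ S_{ε'}} ( val(μ') − w·μ' ) ≥ max_{μ ∈ Δ_M} ( val(μ) − w·μ ) − ε. -/

import Mathlib

open Finset

/-- The value of the extended security game specified by matrices `Ā, B, D`:
`val(μ) = max_{x ∈ Δ_r} [ xᵀBμ + min_j ((xᵀĀ)_j + (Dμ)_j) ]`. -/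
noncomputable def valExt (M r c : ℕ) (Abar : Matrix (Fin r) (Fin c) ℝ)
    (B : Matrix (Fin r) (Fin M) ℝ) (D : Matrix (Fin c) (Fin M) ℝ)
    (μ : Fin M → ℝ) : ℝ :=
  sSup {t : ℝ | ∃ x ∈ stdSimplex ℝ (Fin r),
    t = (∑ i : Fin r, ∑ θ : Fin M, x i * B i θ * μ θ) +
      ⨅ j : Fin c, ((∑ i : Fin r, x i * Abar i j) + ∑ θ : Fin M, D j θ * μ θ)}

lemma exists_top_finset {M : ℕ} (ℓ : Fin M → ℝ) (m : ℕ) (hm : m ≤ M) :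
    ∃ S : Finset (Fin M), S.card = m ∧ ∀ a ∈ S, ∀ b, b ∉ S → ℓ b ≤ ℓ a := by
  induction m with
  | zero => exact ⟨∅, rfl, by simp⟩
  | succ m ih =>
    obtain ⟨S, hcard, hS⟩ := ih (le_of_lt (Nat.lt_of_succ_le hm))
    have hne : (Sᶜ : Finset (Fin M)).Nonempty := by
      rw [← Finset.card_pos, Finset.card_compl, hcard]
      simp only [Fintype.card_fin]
      omega
    obtain ⟨b0, hb0, hmax⟩ := Finset.exists_max_image Sᶜ ℓ hne
    have hb0S : b0 ∉ S := by simpa using hb0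
    refine ⟨insert b0 S, ?_, ?_⟩
    · rw [Finset.card_insert_of_notMem hb0S, hcard]
    · intro a ha b hb
      rcases Finset.mem_insert.mp ha with h | h
      · subst h
        exact hmax b (by simp only [Finset.mem_compl]; exact fun h => hb (Finset.mem_insert_of_mem h))
      · exact hS a h b (fun hbS => hb (Finset.mem_insert_of_mem hbS))

lemma sum_mul_le_top {M : ℕ} (ℓ f : Fin M → ℝ) (m : ℕ) (hm : m ≤ M)
    (hf0 : ∀ θ, 0 ≤ f θ) (hf1 : ∀ θ, f θ ≤ 1) (hsum : ∑ θ, f θ = m) :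
    ∃ S : Finset (Fin M), S.card = m ∧
      ∑ θ, ℓ θ * f θ ≤ ∑ θ, ℓ θ * (if θ ∈ S then (1:ℝ) else 0) := by
  obtain ⟨S, hcard, hS⟩ := exists_top_finset ℓ m hm
  refine ⟨S, hcard, ?_⟩
  rcases Nat.eq_zero_or_pos m with hm0 | hmpos
  · subst hm0
    have hSe : S = ∅ := Finset.card_eq_zero.mp hcard
    have hfz : ∀ θ ∈ Finset.univ, f θ = 0 := by
      intro θ _
      have := (Finset.sum_eq_zero_iff_of_nonneg (fun i _ => hf0 i)).mp (by simpa using hsum)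
      exact this θ (Finset.mem_univ θ)
    subst hSe
    simp only [Finset.notMem_empty, if_false, mul_zero]
    rw [Finset.sum_congr rfl (fun θ hθ => by rw [hfz θ hθ, mul_zero])]
  · have hSne : S.Nonempty := Finset.card_pos.mp (hcard ▸ hmpos)
    obtain ⟨a0, ha0, hmin⟩ := Finset.exists_min_image S ℓ hSne
    set t := ℓ a0 with ht
    set χ : Fin M → ℝ := fun θ => if θ ∈ S then (1:ℝ) else 0 with hχ
    have hχsum : ∑ θ, χ θ = m := by
      simp only [hχ, Finset.sum_boole, Finset.filter_mem_eq_inter, Finset.univ_inter, hcard]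
    have key : 0 ≤ ∑ θ, (ℓ θ - t) * (χ θ - f θ) := by
      apply Finset.sum_nonneg
      intro θ _
      by_cases hθ : θ ∈ S
      · have h1 : t ≤ ℓ θ := hmin θ hθ
        have h2 : 0 ≤ χ θ - f θ := by simp [hχ, hθ]; linarith [hf1 θ]
        nlinarith
      · have h1 : ℓ θ ≤ t := hS a0 ha0 θ hθ
        have h2 : χ θ - f θ ≤ 0 := by simp [hχ, hθ]; linarith [hf0 θ]
        nlinarith
    have expand : ∑ θ, (ℓ θ - t) * (χ θ - f θ)
        = (∑ θ, ℓ θ * χ θ) - (∑ θ, ℓ θ * f θ) - t * ((∑ θ, χ θ) - ∑ θ, f θ) := by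
      rw [mul_sub, Finset.mul_sum, Finset.mul_sum,
        ← Finset.sum_sub_distrib, ← Finset.sum_sub_distrib, ← Finset.sum_sub_distrib]
      exact Finset.sum_congr rfl fun θ _ => by ring
    rw [expand, hχsum, hsum, sub_self, mul_zero, sub_zero] at key
    linarith

lemma round_lemma {M N : ℕ} (hN : 0 < N) (μ : Fin M → ℝ)
    (hμ : μ ∈ stdSimplex ℝ (Fin M)) (ℓ : Fin M → ℝ) :
    ∃ μ' ∈ stdSimplex ℝ (Fin M), (∀ θ, ∃ z : ℤ, μ' θ = z * (1 / N)) ∧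
      (∑ θ, ℓ θ * μ θ ≤ ∑ θ, ℓ θ * μ' θ) ∧ (∀ θ, |μ' θ - μ θ| ≤ 1 / N) := by
  obtain ⟨hμ0, hμ1⟩ := hμ
  have hN0 : (0:ℝ) < N := by exact_mod_cast hN
  set n : Fin M → ℕ := fun θ => ⌊μ θ * N⌋₊ with hn
  set f : Fin M → ℝ := fun θ => μ θ * N - n θ with hf
  have hf0 : ∀ θ, 0 ≤ f θ := fun θ => by
    simp only [hf, hn, sub_nonneg]
    exact Nat.floor_le (mul_nonneg (hμ0 θ) (le_of_lt hN0))
  have hf1 : ∀ θ, f θ ≤ 1 := fun θ => by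
    have := Nat.lt_floor_add_one (μ θ * N)
    simp only [hf, hn]
    linarith
  have hnf : ∀ θ, (n θ : ℝ) + f θ = μ θ * N := fun θ => by simp [hf]
  have hsum_all : (∑ θ, (n θ : ℝ)) + ∑ θ, f θ = N := by
    rw [← Finset.sum_add_distrib]
    rw [Finset.sum_congr rfl fun θ _ => hnf θ, ← Finset.sum_mul, hμ1, one_mul]
  have hfs0 : 0 ≤ ∑ θ, f θ := Finset.sum_nonneg fun θ _ => hf0 θ
  have hnle : ∑ θ, n θ ≤ N := by
    have : ((∑ θ, n θ : ℕ) : ℝ) ≤ N := by push_cast; linarith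
    exact_mod_cast this
  set m : ℕ := N - ∑ θ, n θ with hm
  have hmcast : (m : ℝ) = ∑ θ, f θ := by
    rw [hm, Nat.cast_sub hnle, Nat.cast_sum]
    linarith
  have hmM : m ≤ M := by
    have : (m : ℝ) ≤ M := by
      rw [hmcast]
      calc ∑ θ, f θ ≤ ∑ θ : Fin M, (1:ℝ) := Finset.sum_le_sum fun θ _ => hf1 θ
        _ = M := by simp
    exact_mod_cast this
  obtain ⟨S, hcard, hSle⟩ := sum_mul_le_top ℓ f m hmM hf0 hf1 hmcast.symm
  set χ : Fin M → ℝ := fun θ => if θ ∈ S then (1:ℝ) else 0 with hχ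
  have hχsum : ∑ θ, χ θ = m := by
    simp only [hχ, Finset.sum_boole, Finset.filter_mem_eq_inter, Finset.univ_inter, hcard]
  refine ⟨fun θ => ((n θ : ℝ) + χ θ) * (1 / N), ⟨?_, ?_⟩, ?_, ?_, ?_⟩
  · intro θ
    have : (0:ℝ) ≤ χ θ := by simp only [hχ]; split <;> norm_num
    positivity
  · rw [← Finset.sum_mul, Finset.sum_add_distrib, hχsum]
    have : (∑ θ, (n θ : ℝ)) + m = N := by
      have : ((∑ θ, n θ : ℕ) : ℝ) + (m : ℝ) = ((∑ θ, n θ) + m : ℕ) := by push_cast; ring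
      rw [hmcast]
      linarith
    rw [this]
    field_simp
  · intro θ
    refine ⟨(n θ : ℤ) + (if θ ∈ S then 1 else 0), ?_⟩
    simp only [hχ]
    split <;> push_cast <;> ring
  · have hμθ : ∀ θ, μ θ = ((n θ : ℝ) + f θ) * (1 / N) := fun θ => by
      rw [hnf θ]; field_simp
    calc ∑ θ, ℓ θ * μ θ = ∑ θ, ℓ θ * (((n θ : ℝ) + f θ) * (1 / N)) :=
          Finset.sum_congr rfl fun θ _ => by rw [← hμθ θ]
      _ = ((∑ θ, ℓ θ * (n θ : ℝ)) + ∑ θ, ℓ θ * f θ) * (1/N) := by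
          rw [← Finset.sum_add_distrib, Finset.sum_mul]
          exact Finset.sum_congr rfl fun θ _ => by ring
      _ ≤ ((∑ θ, ℓ θ * (n θ : ℝ)) + ∑ θ, ℓ θ * χ θ) * (1/N) := by
          apply mul_le_mul_of_nonneg_right _ (by positivity)
          linarith [hSle]
      _ = ∑ θ, ℓ θ * (((n θ : ℝ) + χ θ) * (1 / N)) := by
          rw [← Finset.sum_add_distrib, Finset.sum_mul]
          exact Finset.sum_congr rfl fun θ _ => by ring
  · intro θ
    have hμθ : μ θ = ((n θ : ℝ) + f θ) * (1 / N) := by rw [hnf θ]; field_simp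
    rw [hμθ]
    have : ((n θ : ℝ) + χ θ) * (1 / N) - ((n θ : ℝ) + f θ) * (1 / N)
        = (χ θ - f θ) * (1/N) := by ring
    rw [this, abs_mul, abs_of_pos (by positivity : (0:ℝ) < 1/N)]
    have : |χ θ - f θ| ≤ 1 := by
      rw [abs_le]
      simp only [hχ]
      constructor <;> split <;> [skip; skip; skip; skip] <;> linarith [hf0 θ, hf1 θ]
    nlinarith [this, (by positivity : (0:ℝ) < 1/N)]

lemma aux_prod_le_abs {b x y : ℝ} (hx0 : 0 ≤ x) (hx1 : x ≤ 1) (hy0 : 0 ≤ y) (hy1 : y ≤ 1) :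
    x * b * y ≤ |b| := by
  have h1 : x * b * y ≤ x * |b| * y :=
    mul_le_mul_of_nonneg_right (mul_le_mul_of_nonneg_left (le_abs_self b) hx0) hy0
  have h2 : x * |b| * y ≤ 1 * |b| * 1 :=
    mul_le_mul (mul_le_mul hx1 le_rfl (abs_nonneg b) zero_le_one) hy1 hy0 (by positivity)
  linarith

lemma valExt_set_bddAbove (M r c : ℕ) (hc : 0 < c)
    (Abar : Matrix (Fin r) (Fin c) ℝ) (B : Matrix (Fin r) (Fin M) ℝ)
    (D : Matrix (Fin c) (Fin M) ℝ) (μ : Fin M → ℝ) (hμ : μ ∈ stdSimplex ℝ (Fin M)) :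
    ∀ t ∈ {t : ℝ | ∃ x ∈ stdSimplex ℝ (Fin r),
      t = (∑ i : Fin r, ∑ θ : Fin M, x i * B i θ * μ θ) +
        ⨅ j : Fin c, ((∑ i : Fin r, x i * Abar i j) + ∑ θ : Fin M, D j θ * μ θ)},
      t ≤ (∑ i : Fin r, ∑ θ : Fin M, |B i θ|) +
        ((∑ i : Fin r, |Abar i ⟨0, hc⟩|) + ∑ θ : Fin M, |D ⟨0, hc⟩ θ|) := by
  rintro t ⟨x, hx, rfl⟩
  obtain ⟨hx0, hx1⟩ := hx
  obtain ⟨hμ0, hμ1⟩ := hμ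
  have hx_le : ∀ i, x i ≤ 1 := fun i =>
    hx1 ▸ Finset.single_le_sum (fun i _ => hx0 i) (Finset.mem_univ i)
  have hμ_le : ∀ θ, μ θ ≤ 1 := fun θ =>
    hμ1 ▸ Finset.single_le_sum (fun θ _ => hμ0 θ) (Finset.mem_univ θ)
  apply add_le_add
  · apply Finset.sum_le_sum
    intro i _
    apply Finset.sum_le_sum
    intro θ _
    exact aux_prod_le_abs (hx0 i) (hx_le i) (hμ0 θ) (hμ_le θ)
  · calc (⨅ j : Fin c, ((∑ i : Fin r, x i * Abar i j) + ∑ θ : Fin M, D j θ * μ θ))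
        ≤ (∑ i : Fin r, x i * Abar i ⟨0, hc⟩) + ∑ θ : Fin M, D ⟨0, hc⟩ θ * μ θ :=
          ciInf_le (Finite.bddBelow_range _) (⟨0, hc⟩ : Fin c)
      _ ≤ (∑ i : Fin r, |Abar i ⟨0, hc⟩|) + ∑ θ : Fin M, |D ⟨0, hc⟩ θ| := by
          apply add_le_add
          · apply Finset.sum_le_sum
            intro i _
            have := aux_prod_le_abs (b := Abar i ⟨0, hc⟩) (hx0 i) (hx_le i) zero_le_one le_rfl
            linarith
          · apply Finset.sum_le_sum
            intro θ _
            have h := aux_prod_le_abs (b := D ⟨0, hc⟩ θ) (hμ0 θ) (hμ_le θ) zero_le_one le_rfl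
            calc D ⟨0, hc⟩ θ * μ θ = μ θ * D ⟨0, hc⟩ θ * 1 := by ring
              _ ≤ |D ⟨0, hc⟩ θ| := h

lemma uniform_mem_stdSimplex (k : ℕ) (hk : 0 < k) :
    (fun _ => (k:ℝ)⁻¹) ∈ stdSimplex ℝ (Fin k) := by
  constructor
  · intro i; positivity
  · simp [Finset.sum_const, Finset.card_univ]
    field_simp

/-- Grid approximation for `γ`-Lipschitz extended security games: if
`‖D(μ - μ')‖_∞ ≤ γ‖μ - μ'‖_∞` on the simplex, `ε' = ε/γ` and `1/ε'` is a
positive integer, then for every `w`, the maximum of `val(μ') - w·μ'` over the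
grid `S_{ε'}` is at least the maximum of `val(μ) - w·μ` over the whole simplex,
minus `ε`. -/
theorem grid_approx_lipschitz (M r c : ℕ) (hM : 0 < M) (hr : 0 < r) (hc : 0 < c)
    (Abar : Matrix (Fin r) (Fin c) ℝ)
    (B : Matrix (Fin r) (Fin M) ℝ) (D : Matrix (Fin c) (Fin M) ℝ)
    (γ ε : ℝ) (hγ : 0 < γ) (hε : 0 < ε)
    (hgrid : ∃ N : ℕ, 0 < N ∧ ε / γ = 1 / N)
    (hLip : ∀ μ ∈ stdSimplex ℝ (Fin M), ∀ μ' ∈ stdSimplex ℝ (Fin M), ∀ j : Fin c,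
      |(∑ θ : Fin M, D j θ * μ θ) - ∑ θ : Fin M, D j θ * μ' θ| ≤
        γ * ⨆ θ : Fin M, |μ θ - μ' θ|)
    (w : Fin M → ℝ) :
    sSup {t : ℝ | ∃ μ' ∈ stdSimplex ℝ (Fin M),
        (∀ θ, ∃ z : ℤ, μ' θ = z * (ε / γ)) ∧
        t = valExt M r c Abar B D μ' - ∑ θ : Fin M, w θ * μ' θ} ≥
      sSup {t : ℝ | ∃ μ ∈ stdSimplex ℝ (Fin M),
        t = valExt M r c Abar B D μ - ∑ θ : Fin M, w θ * μ θ} - ε := by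
  obtain ⟨N, hNpos, hδ⟩ := hgrid
  haveI : Nonempty (Fin M) := ⟨⟨0, hM⟩⟩
  haveI : Nonempty (Fin c) := ⟨⟨0, hc⟩⟩
  set K : ℝ := (∑ i : Fin r, ∑ θ : Fin M, |B i θ|) +
    ((∑ i : Fin r, |Abar i ⟨0, hc⟩|) + ∑ θ : Fin M, |D ⟨0, hc⟩ θ|) with hK
  have hne_val : ∀ μ : Fin M → ℝ, Set.Nonempty {t : ℝ | ∃ x ∈ stdSimplex ℝ (Fin r),
      t = (∑ i : Fin r, ∑ θ : Fin M, x i * B i θ * μ θ) +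
        ⨅ j : Fin c, ((∑ i : Fin r, x i * Abar i j) + ∑ θ : Fin M, D j θ * μ θ)} :=
    fun μ => ⟨_, fun _ => (r:ℝ)⁻¹, uniform_mem_stdSimplex r hr, rfl⟩
  have hbdd_val : ∀ μ ∈ stdSimplex ℝ (Fin M), BddAbove {t : ℝ | ∃ x ∈ stdSimplex ℝ (Fin r),
      t = (∑ i : Fin r, ∑ θ : Fin M, x i * B i θ * μ θ) +
        ⨅ j : Fin c, ((∑ i : Fin r, x i * Abar i j) + ∑ θ : Fin M, D j θ * μ θ)} :=
    fun μ hμ => ⟨K, fun t ht => valExt_set_bddAbove M r c hc Abar B D μ hμ t ht⟩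
  have hval_le : ∀ μ ∈ stdSimplex ℝ (Fin M), valExt M r c Abar B D μ ≤ K := fun μ hμ => by
    rw [valExt]
    exact csSup_le (hne_val μ) (valExt_set_bddAbove M r c hc Abar B D μ hμ)
  have hW : ∀ μ' ∈ stdSimplex ℝ (Fin M),
      -(∑ θ : Fin M, w θ * μ' θ) ≤ ∑ θ : Fin M, |w θ| := by
    intro μ' hμ'
    have h1 : ∀ θ, μ' θ ≤ 1 := fun θ =>
      hμ'.2 ▸ Finset.single_le_sum (fun θ _ => hμ'.1 θ) (Finset.mem_univ θ)
    rw [← Finset.sum_neg_distrib]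
    apply Finset.sum_le_sum
    intro θ _
    calc -(w θ * μ' θ) = μ' θ * (-w θ) * 1 := by ring
      _ ≤ |-w θ| := aux_prod_le_abs (hμ'.1 θ) (h1 θ) zero_le_one le_rfl
      _ = |w θ| := abs_neg _
  have hT'bdd : BddAbove {t : ℝ | ∃ μ' ∈ stdSimplex ℝ (Fin M),
      (∀ θ, ∃ z : ℤ, μ' θ = z * (ε / γ)) ∧
      t = valExt M r c Abar B D μ' - ∑ θ : Fin M, w θ * μ' θ} := by
    refine ⟨K + ∑ θ : Fin M, |w θ|, ?_⟩
    rintro t ⟨μ', hμ', _, rfl⟩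
    have h1 := hval_le μ' hμ'
    have h2 := hW μ' hμ'
    linarith
  rw [ge_iff_le, sub_le_iff_le_add]
  refine csSup_le ⟨valExt M r c Abar B D (fun _ => (M:ℝ)⁻¹) - ∑ θ : Fin M, w θ * (M:ℝ)⁻¹,
    fun _ => (M:ℝ)⁻¹, uniform_mem_stdSimplex M hM, rfl⟩ ?_
  rintro t ⟨μ, hμs, rfl⟩
  have key : valExt M r c Abar B D μ ≤
      sSup {t : ℝ | ∃ μ' ∈ stdSimplex ℝ (Fin M),
        (∀ θ, ∃ z : ℤ, μ' θ = z * (ε / γ)) ∧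
        t = valExt M r c Abar B D μ' - ∑ θ : Fin M, w θ * μ' θ} +
      ε + ∑ θ : Fin M, w θ * μ θ := by
    rw [valExt]
    apply csSup_le (hne_val μ)
    rintro s ⟨x, hx, rfl⟩
    set ℓ : Fin M → ℝ := fun θ => (∑ i : Fin r, x i * B i θ) - w θ with hℓdef
    obtain ⟨μ', hμ's, hgridμ', hℓle, hdist⟩ := round_lemma hNpos μ hμs ℓ
    have hgrid' : ∀ θ, ∃ z : ℤ, μ' θ = z * (ε / γ) := fun θ => by
      obtain ⟨z, hz⟩ := hgridμ' θ
      exact ⟨z, by rw [hδ]; exact hz⟩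
    have e1 : ∀ ν : Fin M → ℝ,
        (∑ i : Fin r, ∑ θ : Fin M, x i * B i θ * ν θ) - ∑ θ : Fin M, w θ * ν θ
          = ∑ θ : Fin M, ℓ θ * ν θ := by
      intro ν
      rw [Finset.sum_comm, ← Finset.sum_sub_distrib]
      apply Finset.sum_congr rfl
      intro θ _
      simp only [hℓdef]
      rw [sub_mul, Finset.sum_mul]
    have ha : (∑ i : Fin r, ∑ θ : Fin M, x i * B i θ * μ θ) - ∑ θ : Fin M, w θ * μ θ ≤
        (∑ i : Fin r, ∑ θ : Fin M, x i * B i θ * μ' θ) - ∑ θ : Fin M, w θ * μ' θ := by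
      rw [e1 μ, e1 μ']; exact hℓle
    have hb : ∀ j : Fin c, (∑ θ : Fin M, D j θ * μ θ) - ε ≤ ∑ θ : Fin M, D j θ * μ' θ := by
      intro j
      have h1 := hLip μ hμs μ' hμ's j
      have h2 : (⨆ θ : Fin M, |μ θ - μ' θ|) ≤ 1 / N :=
        ciSup_le fun θ => by rw [abs_sub_comm]; exact hdist θ
      have hsup0 : γ * (⨆ θ : Fin M, |μ θ - μ' θ|) ≤ γ * (1 / N) :=
        mul_le_mul_of_nonneg_left h2 hγ.le
      have heq : γ * (1 / (N:ℝ)) = ε := by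
        rw [← hδ]; field_simp
      have habs := abs_le.mp h1
      linarith [habs.1, habs.2]
    have hinf : (⨅ j : Fin c, ((∑ i : Fin r, x i * Abar i j) + ∑ θ : Fin M, D j θ * μ θ)) - ε
        ≤ ⨅ j : Fin c, ((∑ i : Fin r, x i * Abar i j) + ∑ θ : Fin M, D j θ * μ' θ) := by
      apply le_ciInf
      intro j
      have h4 : (⨅ j : Fin c, ((∑ i : Fin r, x i * Abar i j) + ∑ θ : Fin M, D j θ * μ θ))
          ≤ (∑ i : Fin r, x i * Abar i j) + ∑ θ : Fin M, D j θ * μ θ :=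
        ciInf_le (Finite.bddBelow_range _) j
      have h5 := hb j
      linarith
    have h6 : (∑ i : Fin r, ∑ θ : Fin M, x i * B i θ * μ' θ) +
        (⨅ j : Fin c, ((∑ i : Fin r, x i * Abar i j) + ∑ θ : Fin M, D j θ * μ' θ))
          ≤ valExt M r c Abar B D μ' := by
      rw [valExt]
      exact le_csSup (hbdd_val μ' hμ's) ⟨x, hx, rfl⟩
    have h7 : valExt M r c Abar B D μ' - ∑ θ : Fin M, w θ * μ' θ ≤
        sSup {t : ℝ | ∃ μ' ∈ stdSimplex ℝ (Fin M),
          (∀ θ, ∃ z : ℤ, μ' θ = z * (ε / γ)) ∧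
          t = valExt M r c Abar B D μ' - ∑ θ : Fin M, w θ * μ' θ} :=
      le_csSup hT'bdd ⟨μ', hμ's, hgrid', rfl⟩
    linarith
  linarith
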